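/- arXiv:2007.16180 — 4 statements merged into one kernel-verified Lean document; each statement's English description precedes it below -/
import Mathlib

section
/- Let p : E ⥤ B be a fibration, and let φ : A ⟶ B in E factor as a cocartesian arrow followed by a vertical arrow υ. Then φ is p-epic if and only if υ is an epimorphism in the fibre category E_{p(B)}. -/
open CategoryTheory Functor

/-- `φ` is `p`-epic: postcomposition with pairs of arrows lying over a common arrow of
the base is injective. -/
def PEpic {E B : Type*} [Category E] [Category B] (p : E ⥤ B) {A b : E}
    (φ : A ⟶ b) : Prop :=
  ∀ {b' : E} (ψ ψ' : b ⟶ b'), p.map ψ = p.map ψ' → φ ≫ ψ = φ ≫ ψ' → ψ = ψ'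

/-- For a fibration `p`, if `φ = θ ≫ υ` with `θ` cocartesian and `υ` a
vertical arrow (a morphism `υf` in the fibre over `S = p(b)`), then `φ` is `p`-epic iff
`υ` is an epimorphism in the fibre category. -/
theorem stmt_7 {E B : Type*} [Category E] [Category B] (p : E ⥤ B) [p.IsFibered]
    {S : B} (Cf Bf : Fiber p S) (υf : Cf ⟶ Bf)
    {A : E} (θ : A ⟶ Fiber.fiberInclusion.obj Cf)
    [p.IsStronglyCocartesian (p.map θ) θ] :
    PEpic p (θ ≫ Fiber.fiberInclusion.map υf) ↔ Epi υf := by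
  obtain ⟨Bo, hB, hBf⟩ : ∃ Bo : E, ∃ hB : p.obj Bo = S, Bf = Fiber.mk hB := ⟨Bf.1, Bf.2, rfl⟩
  subst hBf
  subst hB
  constructor
  · -- PEpic → Epi
    intro h
    refine ⟨fun {Z} α β hαβ => ?_⟩
    apply Fiber.hom_ext
    apply h (Fiber.fiberInclusion.map α) (Fiber.fiberInclusion.map β)
    · rw [IsHomLift.fac' p (𝟙 (p.obj Bo)) (Fiber.fiberInclusion.map α),
        IsHomLift.fac' p (𝟙 (p.obj Bo)) (Fiber.fiberInclusion.map β)]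
    · rw [Category.assoc, Category.assoc, ← Functor.map_comp, ← Functor.map_comp, hαβ]
  · -- Epi → PEpic
    intro h b' ψ ψ' hp hcomp
    -- Step 1: cancel θ using strong cocartesianness
    have hmapeq : p.map (Fiber.fiberInclusion.map υf ≫ ψ) =
        p.map (Fiber.fiberInclusion.map υf ≫ ψ') := by
      rw [Functor.map_comp, Functor.map_comp, hp]
    haveI h1 : p.IsHomLift (p.map (Fiber.fiberInclusion.map υf ≫ ψ))
        (Fiber.fiberInclusion.map υf ≫ ψ') := by
      rw [hmapeq]; infer_instance
    have heq : Fiber.fiberInclusion.map υf ≫ ψ = Fiber.fiberInclusion.map υf ≫ ψ' := by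
      apply IsStronglyCocartesian.ext p (p.map θ) θ
        (p.map (Fiber.fiberInclusion.map υf ≫ ψ))
      rw [Category.assoc, Category.assoc] at hcomp
      exact hcomp
    -- Step 2: factor ψ and ψ' through a cartesian lift of p.map ψ
    haveI h2 : p.IsHomLift (p.map ψ) ψ' := by rw [hp]; infer_instance
    let e : E := IsPreFibered.pullbackObj (rfl : p.obj b' = p.obj b') (p.map ψ)
    let τ : e ⟶ b' := IsPreFibered.pullbackMap (rfl : p.obj b' = p.obj b') (p.map ψ)
    haveI : p.IsStronglyCartesian (p.map ψ) τ := inferInstance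
    haveI hψ1 : p.IsHomLift (R := p.obj Bo) (p.map ψ) ψ := IsHomLift.map ψ
    haveI hψ2 : p.IsHomLift (R := p.obj Bo) (p.map ψ) ψ' := h2
    let αψ : Fiber.fiberInclusion.obj (Fiber.mk (rfl : p.obj Bo = p.obj Bo)) ⟶ e := IsStronglyCartesian.map p (p.map ψ) τ
      (R' := p.obj Bo) (f' := p.map ψ) (g := 𝟙 (p.obj Bo)) (Category.id_comp _).symm ψ
    let αψ' : Fiber.fiberInclusion.obj (Fiber.mk (rfl : p.obj Bo = p.obj Bo)) ⟶ e := IsStronglyCartesian.map p (p.map ψ) τ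
      (R' := p.obj Bo) (f' := p.map ψ) (g := 𝟙 (p.obj Bo)) (Category.id_comp _).symm ψ'
    have facψ : αψ ≫ τ = ψ := IsStronglyCartesian.fac p (p.map ψ) τ _ ψ
    have facψ' : αψ' ≫ τ = ψ' := IsStronglyCartesian.fac p (p.map ψ) τ _ ψ'
    haveI hαψ : p.IsHomLift (𝟙 (p.obj Bo)) αψ :=
      IsStronglyCartesian.map_isHomLift p (p.map ψ) τ (Category.id_comp _).symm ψ
    haveI hαψ' : p.IsHomLift (𝟙 (p.obj Bo)) αψ' :=
      IsStronglyCartesian.map_isHomLift p (p.map ψ) τ (Category.id_comp _).symm ψ'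
    have he : p.obj e = p.obj Bo :=
      IsHomLift.codomain_eq p (𝟙 (p.obj Bo)) αψ
    -- cancel τ to show Fiber.fiberInclusion.map υf ≫ αψ = Fiber.fiberInclusion.map υf ≫ αψ'
    have hmap2 : p.map (Fiber.fiberInclusion.map υf ≫ αψ) =
        p.map (Fiber.fiberInclusion.map υf ≫ αψ') := by
      rw [Functor.map_comp, Functor.map_comp, IsHomLift.fac' p (𝟙 (p.obj Bo)) αψ,
        IsHomLift.fac' p (𝟙 (p.obj Bo)) αψ']
    haveI h3 : p.IsHomLift (p.map (Fiber.fiberInclusion.map υf ≫ αψ))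
        (Fiber.fiberInclusion.map υf ≫ αψ') := by
      rw [hmap2]; infer_instance
    haveI h4 : p.IsHomLift (p.map (Fiber.fiberInclusion.map υf))
        (Fiber.fiberInclusion.map υf ≫ αψ) := by
      haveI : p.IsHomLift (𝟙 (p.obj (Fiber.fiberInclusion.obj (Fiber.mk (rfl : p.obj Bo = p.obj Bo))))) αψ := hαψ
      infer_instance
    haveI h5 : p.IsHomLift (p.map (Fiber.fiberInclusion.map υf))
        (Fiber.fiberInclusion.map υf ≫ αψ') := by
      haveI : p.IsHomLift (𝟙 (p.obj (Fiber.fiberInclusion.obj (Fiber.mk (rfl : p.obj Bo = p.obj Bo))))) αψ' := hαψ'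
      infer_instance
    have heq2 : Fiber.fiberInclusion.map υf ≫ αψ = Fiber.fiberInclusion.map υf ≫ αψ' := by
      apply IsStronglyCartesian.ext p (p.map ψ) τ (p.map (Fiber.fiberInclusion.map υf))
      rw [Category.assoc, Category.assoc, facψ, facψ', heq]
    -- transfer to the fiber and use that υf is epi
    let Bff : Fiber p (p.obj Bo) := Fiber.mk (rfl : p.obj Bo = p.obj Bo)
    let Zf : Fiber p (p.obj Bo) := Fiber.mk he
    let a : Bff ⟶ Zf := ⟨αψ, hαψ⟩
    let a' : Bff ⟶ Zf := ⟨αψ', hαψ'⟩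
    have hcc : υf ≫ a = υf ≫ a' := Subtype.ext heq2
    have haa' : a = a' := h.left_cancellation a a' hcc
    have hval : αψ = αψ' := congrArg Subtype.val haa'
    rw [← facψ, ← facψ', hval]
end

section
/- Let (L, R) be a weak factorisation system on a category C, let F = R regarded as a full subcategory of the arrow category, and consider the fibration cod|_F : F ⥤ C. An arrow (f₀, f₁) : a ⟶ b of F (a commutative square with f₁ : A ⟶ B on top, f₀ : X ⟶ Y on the bottom, a : A ⟶ X, b : B ⟶ Y in F) is cod|_F-epic if and only if every lifting problem of f₁ against an arrow in F has at most one diagonal filler. -/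
open CategoryTheory Functor Limits

/-- `f` is a retract of `g` in the arrow category. -/
def IsRetractOf {C : Type*} [Category C] {A X B Y : C} (f : A ⟶ X) (g : B ⟶ Y) : Prop :=
  ∃ (i : A ⟶ B) (r : B ⟶ A) (j : X ⟶ Y) (s : Y ⟶ X),
    i ≫ r = 𝟙 A ∧ j ≫ s = 𝟙 X ∧ i ≫ g = f ≫ j ∧ r ≫ f = g ≫ s

/-- `(L, R)` is a weak factorisation system: both classes contain the isomorphisms and
are closed under retracts, every arrow factors as an `L`-map followed by an `R`-map,
and `L`-maps have the left lifting property against `R`-maps. -/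
def IsWFS {C : Type*} [Category C] (L R : MorphismProperty C) : Prop :=
  (∀ {X Y : C} (e : X ⟶ Y), IsIso e → L e ∧ R e) ∧
  (∀ {A X B Y : C} (f : A ⟶ X) (g : B ⟶ Y), IsRetractOf f g → (L g → L f) ∧ (R g → R f)) ∧
  (∀ {X Y : C} (f : X ⟶ Y), ∃ (Z : C) (i : X ⟶ Z) (q : Z ⟶ Y), L i ∧ R q ∧ i ≫ q = f) ∧
  (∀ {A X B Y : C} (i : A ⟶ X) (q : B ⟶ Y), L i → R q → HasLiftingProperty i q)

/-- The fibration `cod|_F : F ⥤ C` on the full subcategory `F` of the arrow category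
spanned by the arrows in `R`. -/
def codR {C : Type*} [Category C] (R : MorphismProperty C) :
    ObjectProperty.FullSubcategory (fun g : Arrow C => R g.hom) ⥤ C :=
  ObjectProperty.ι _ ⋙ Arrow.rightFunc

/-- In a WFS, any map with the RLP against all of `L` is in `R` (retract argument). -/
lemma IsWFS.rlp_mem {C : Type*} [Category C] {L R : MorphismProperty C} (hwfs : IsWFS L R)
    {X Y : C} (q : X ⟶ Y) (hq : ∀ {A B : C} (i : A ⟶ B), L i → HasLiftingProperty i q) :
    R q := by
  obtain ⟨Z, i, r, hi, hr, hir⟩ := hwfs.2.2.1 q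
  have : HasLiftingProperty i q := hq i hi
  have sq : CommSq (𝟙 X) i q r := ⟨by simp [hir]⟩
  obtain ⟨⟨lift⟩⟩ := this.sq_hasLift sq
  refine (hwfs.2.1 q r ⟨i, lift.l, 𝟙 Y, 𝟙 Y, lift.fac_left, by simp, by simp [hir], ?_⟩).2 hr
  simp [lift.fac_right]

/-- In a WFS, `R` is closed under composition. -/
lemma IsWFS.R_comp {C : Type*} [Category C] {L R : MorphismProperty C} (hwfs : IsWFS L R)
    {X Y Z : C} {q : X ⟶ Y} {q' : Y ⟶ Z} (hq : R q) (hq' : R q') : R (q ≫ q') := by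
  refine hwfs.rlp_mem _ (fun i hi => ?_)
  have := hwfs.2.2.2 i q hi hq
  have := hwfs.2.2.2 i q' hi hq'
  infer_instance

/-- for a weak factorisation system `(L, R)` with `R` stable under
pullback, an arrow `sq : a ⟶ b` of the full subcategory `F = R` of the arrow category
(a commutative square with top component `sq.left = f₁` and bottom component
`sq.right = f₀`) is `cod|_F`-epic iff every lifting problem of `f₁` against an arrow
in `F` has at most one diagonal filler. -/
theorem stmt_10 {C : Type*} [Category C] [HasPullbacks C]
    (L R : MorphismProperty C) (hwfs : IsWFS L R) [R.IsStableUnderBaseChange]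
    (a b : ObjectProperty.FullSubcategory (fun g : Arrow C => R g.hom)) (sq : a ⟶ b) :
    PEpic (codR R) sq ↔
      ∀ (g : Arrow C), R g.hom →
        ∀ (h : a.obj.left ⟶ g.left) (k : b.obj.left ⟶ g.right),
          h ≫ g.hom = sq.hom.left ≫ k →
            ∀ (d d' : b.obj.left ⟶ g.left),
              sq.hom.left ≫ d = h → d ≫ g.hom = k →
              sq.hom.left ≫ d' = h → d' ≫ g.hom = k → d = d' := by
  constructor
  · intro hepi g hg h k hsq d d' hd1 hd2 hd1' hd2'
    -- pull back `g.hom` along `k`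
    let P := pullback g.hom k
    have hp : R (pullback.snd g.hom k) := MorphismProperty.pullback_snd _ _ hg
    let b' : ObjectProperty.FullSubcategory (fun g : Arrow C => R g.hom) :=
      ⟨Arrow.mk (pullback.snd g.hom k ≫ b.obj.hom), hwfs.R_comp hp b.property⟩
    let s : b.obj.left ⟶ P := pullback.lift d (𝟙 _) (by simp [hd2])
    let s' : b.obj.left ⟶ P := pullback.lift d' (𝟙 _) (by simp [hd2'])
    have hs : s ≫ pullback.snd g.hom k = 𝟙 _ := pullback.lift_snd _ _ _
    have hs' : s' ≫ pullback.snd g.hom k = 𝟙 _ := pullback.lift_snd _ _ _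
    have hsf : s ≫ pullback.fst g.hom k = d := pullback.lift_fst _ _ _
    have hsf' : s' ≫ pullback.fst g.hom k = d' := pullback.lift_fst _ _ _
    let ψ : b ⟶ b' := ObjectProperty.homMk (Arrow.homMk (u := s) (v := 𝟙 _) (by simp [b', reassoc_of% hs]))
    let ψ' : b ⟶ b' := ObjectProperty.homMk (Arrow.homMk (u := s') (v := 𝟙 _) (by simp [b', reassoc_of% hs']))
    have key : ψ = ψ' := by
      apply hepi
      · rfl
      · apply ObjectProperty.hom_ext
        apply CommaMorphism.ext
        · show sq.hom.left ≫ s = sq.hom.left ≫ s'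
          apply pullback.hom_ext
          · simp [hsf, hsf', hd1, hd1']
          · simp [hs, hs']
        · rfl
    have : s = s' := congrArg (fun f => f.hom.left) key
    calc d = s ≫ pullback.fst g.hom k := by rw [hsf]
    _ = s' ≫ pullback.fst g.hom k := by rw [this]
    _ = d' := by rw [hsf']
  · intro huniq b' ψ ψ' hbase hcomp
    have hbase' : ψ.hom.right = ψ'.hom.right := hbase
    apply ObjectProperty.hom_ext
    apply CommaMorphism.ext
    · refine huniq b'.obj b'.property (sq.hom.left ≫ ψ.hom.left) (b.obj.hom ≫ ψ.hom.right) ?_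
        ψ.hom.left ψ'.hom.left rfl ?_ ?_ ?_
      · rw [Category.assoc, Arrow.w ψ.hom]
      · exact Arrow.w ψ.hom
      · have := congrArg (fun f => f.hom.left) hcomp
        simpa using this.symm
      · rw [hbase', Arrow.w ψ'.hom]
    · exact hbase'
end

section
/- Let C be a category with pullbacks. For every pair of arrows f : Y ⟶ Z (with Z having products with X, etc.) and object a : A ⟶ Z × X in the slice over Z × X, the codomain fibration cod : C² ⥤ C satisfies the Beck–Chevalley condition for the pullback square formed by f × X : Y × X ⟶ Z × X and the parametrised diagonals: composition with the parametrised diagonal ⟨pr₁, pr₂, pr₂⟩ gives a left adjoint to pullback along ⟨pr₁, pr₂, pr₂⟩, and the canonical comparison map Σ_{Y,X}((f × X)* a) ⟶ (f × X × X)*(Σ_{Z,X} a) is an isomorphism. -/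
open CategoryTheory Limits

noncomputable section

variable {C : Type*} [Category C] [HasFiniteLimits C]

/-- The parametrised diagonal `⟨pr₁, pr₂, pr₂⟩ : Y × X ⟶ (Y × X) × X`. -/
def pdiag (Y X : C) : Y ⨯ X ⟶ (Y ⨯ X) ⨯ X := prod.lift (𝟙 _) prod.snd

lemma pdiag_square {Y Z : C} (X : C) (f : Y ⟶ Z) :
    prod.map f (𝟙 X) ≫ pdiag Z X = pdiag Y X ≫ prod.map (prod.map f (𝟙 X)) (𝟙 X) := by
  apply Limits.prod.hom_ext <;> simp [pdiag]

/-- The canonical Beck–Chevalley comparison map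
`Σ_{Y,X}((f × X)* a) ⟶ (f × X × X)*(Σ_{Z,X} a)` for the codomain fibration. -/
def bcMap {Y Z : C} (X : C) (f : Y ⟶ Z) (a : Over (Z ⨯ X)) :
    (Over.map (pdiag Y X)).obj ((Over.pullback (prod.map f (𝟙 X))).obj a) ⟶
      (Over.pullback (prod.map (prod.map f (𝟙 X)) (𝟙 X))).obj
        ((Over.map (pdiag Z X)).obj a) :=
  Over.homMk
    (pullback.lift (pullback.fst a.hom (prod.map f (𝟙 X)))
      (pullback.snd a.hom (prod.map f (𝟙 X)) ≫ pdiag Y X)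
      (by rw [Over.map_obj_hom, ← Category.assoc, pullback.condition, Category.assoc,
            pdiag_square, ← Category.assoc]))
    (by exact pullback.lift_snd _ _ _)

lemma pdiag_isPullback {Y Z : C} (X : C) (f : Y ⟶ Z) :
    IsPullback (prod.map f (𝟙 X)) (pdiag Y X) (pdiag Z X)
      (prod.map (prod.map f (𝟙 X)) (𝟙 X)) := by
  refine ⟨⟨pdiag_square X f⟩, ⟨PullbackCone.IsLimit.mk _
    (fun s => s.snd ≫ prod.fst) (fun s => ?_) (fun s => ?_) (fun s m h1 h2 => ?_)⟩⟩
  · have h := s.condition =≫ prod.fst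
    simp only [Category.assoc, pdiag, prod.lift_fst, prod.map_fst, Category.comp_id] at h
    simpa using h.symm
  · have h := s.condition =≫ prod.snd
    simp only [Category.assoc, pdiag, prod.lift_snd, prod.map_snd, Category.comp_id] at h
    have h' := s.condition =≫ prod.fst
    simp only [Category.assoc, pdiag, prod.lift_fst, prod.map_fst, Category.comp_id] at h'
    apply Limits.prod.hom_ext
    · simp only [pdiag, Category.assoc, prod.lift_fst, Category.comp_id]
    · simp only [pdiag, Category.assoc, prod.lift_snd]
      rw [← h, h']
      simp
  · have := h2 =≫ prod.fst
    simp only [Category.assoc, pdiag] at this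
    erw [prod.lift_fst, Category.comp_id] at this
    exact this

/-- for the codomain fibration, composition with the parametrised
diagonal is left adjoint to pullback along it, and the Beck–Chevalley comparison map
`Σ_{Y,X}((f × X)* a) ⟶ (f × X × X)*(Σ_{Z,X} a)` is an isomorphism. -/
theorem stmt_12 {Y Z : C} (X : C) (f : Y ⟶ Z) (a : Over (Z ⨯ X)) :
    Nonempty (Over.map (pdiag Y X) ⊣ Over.pullback (pdiag Y X)) ∧
      IsIso (bcMap X f a) := by
  constructor
  · exact ⟨Over.mapPullbackAdj _⟩
  · have big : IsPullback (pullback.fst a.hom (prod.map f (𝟙 X)))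
        (pullback.snd a.hom (prod.map f (𝟙 X)) ≫ pdiag Y X)
        (a.hom ≫ pdiag Z X) (prod.map (prod.map f (𝟙 X)) (𝟙 X)) :=
      (IsPullback.of_hasPullback a.hom (prod.map f (𝟙 X))).paste_vert
        (pdiag_isPullback X f)
    have hiso : IsIso (bcMap X f a).left := by
      have : (bcMap X f a).left = big.isoPullback.hom := by
        apply pullback.hom_ext
        · simp [bcMap]
          exact pullback.lift_fst _ _ _
        · simp [bcMap]
          exact pullback.lift_snd _ _ _
      rw [this]
      infer_instance
    haveI : IsIso ((Over.forget _).map (bcMap X f a)) := hiso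
    exact isIso_of_reflects_iso (bcMap X f a) (Over.forget _)

end
end

section
/- Let B be a small category. The pair of functors refl : B ⥤ B^≅ (sending an object to its identity isomorphism) over the diagonal Δ : B ⥤ B × B is a morphism of algebras from (id_B with its canonical algebra structure) to (⟨cod, dom⟩ : B^≅ ⥤ B × B with structure map str_B): that is, the square str_B ∘ M(Δ, refl) = refl ∘ (R id_B structure map) commutes, where M(Δ, refl) : M(id_B) ⥤ M(⟨cod,dom⟩) is the induced functor. -/
open CategoryTheory

universe u

/-- `B^≅`: the full subcategory of the arrow category spanned by the isomorphisms. -/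
abbrev IsoCat (D : Type u) [SmallCategory D] :=
  ObjectProperty.FullSubcategory (fun f : Arrow D => IsIso f.hom)

/-- The codomain functor restricted to isomorphisms. -/
def isoCod (D : Type u) [SmallCategory D] : IsoCat D ⥤ D :=
  ObjectProperty.ι _ ⋙ Arrow.rightFunc

/-- The domain functor restricted to isomorphisms. -/
def isoDom (D : Type u) [SmallCategory D] : IsoCat D ⥤ D :=
  ObjectProperty.ι _ ⋙ Arrow.leftFunc

/-- `P = ⟨cod, dom⟩ : B^≅ ⥤ B × B`. -/
def isoP (D : Type u) [SmallCategory D] : IsoCat D ⥤ D × D :=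
  Functor.prod' (isoCod D) (isoDom D)

/-- `M F` for `F : A ⥤ B`: objects are pairs `(A, x : B ≅ F A)`. -/
abbrev MCat {A B : Type u} [SmallCategory A] [SmallCategory B] (F : A ⥤ B) :=
  ObjectProperty.FullSubcategory (fun c : Comma (𝟭 B) F => IsIso c.hom)

/-- `R F : M F ⥤ B`: the structure map of the algebra `id_B`, sending `(A, x : B ≅ A)`
to `B`. -/
def rCat {A B : Type u} [SmallCategory A] [SmallCategory B] (F : A ⥤ B) :
    MCat F ⥤ B :=
  ObjectProperty.ι _ ⋙ Comma.fst _ _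

/-- `refl : B ⥤ B^≅` sends an object to its identity isomorphism. -/
def reflF (B : Type u) [SmallCategory B] : B ⥤ IsoCat B where
  obj X := ⟨Arrow.mk (𝟙 X), by dsimp; infer_instance⟩
  map f := ObjectProperty.homMk (Arrow.homMk (u := f) (v := f) (by simp))
  map_id _ := rfl
  map_comp _ _ := rfl

/-- `str_B : M P ⥤ B^≅`, sending `(y, (b₂, b₁))` to `b₂⁻¹ ∘ y ∘ b₁`. -/
noncomputable def strB (B : Type u) [SmallCategory B] : MCat (isoP B) ⥤ IsoCat B where
  obj c :=
    haveI := c.obj.right.2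
    haveI : IsIso c.obj.hom.1 := ((isIso_prod_iff (C := B) (D := B)).mp c.2).1
    haveI : IsIso c.obj.hom.2 := ((isIso_prod_iff (C := B) (D := B)).mp c.2).2
    ⟨Arrow.mk (c.obj.hom.2 ≫ c.obj.right.obj.hom ≫ @inv _ _ _ _ c.obj.hom.1 ((isIso_prod_iff (C := B) (D := B)).mp c.2).1), by
      dsimp
      exact IsIso.comp_isIso' ((isIso_prod_iff (C := B) (D := B)).mp c.2).2
        (IsIso.comp_isIso' c.obj.right.2
          (@IsIso.inv_isIso _ _ _ _ _ ((isIso_prod_iff (C := B) (D := B)).mp c.2).1))⟩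
  map := fun {c c'} m =>
    ObjectProperty.homMk (Arrow.homMk (u := m.hom.left.2) (v := m.hom.left.1) (by
      have aux : ∀ {A1 A2 A1' A2' L R L' R' : B} (p1 : A1 ⟶ R) (p2 : A2 ⟶ L) (y : L ⟶ R)
          (p1' : A1' ⟶ R') (p2' : A2' ⟶ L') (y' : L' ⟶ R') (u1 : A1 ⟶ A1') (u2 : A2 ⟶ A2')
          (l : L ⟶ L') (r : R ⟶ R') [IsIso p1] [IsIso p1'],
          u1 ≫ p1' = p1 ≫ r → u2 ≫ p2' = p2 ≫ l → l ≫ y' = y ≫ r →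
          u2 ≫ p2' ≫ y' ≫ inv p1' = (p2 ≫ y ≫ inv p1) ≫ u1 := by
        intro A1 A2 A1' A2' L R L' R' p1 p2 y p1' p2' y' u1 u2 l r _ _ h1 h2 hw
        have key : r ≫ inv p1' = inv p1 ≫ u1 := by
          rw [IsIso.comp_inv_eq, Category.assoc, h1, IsIso.inv_hom_id_assoc]
        rw [← Category.assoc, h2, Category.assoc, reassoc_of% hw, key]
        simp only [Category.assoc]
      exact @aux _ _ _ _ _ _ _ _ _ _ _ _ _ _ _ _ _ _
        ((isIso_prod_iff (C := B) (D := B)).mp c.2).1 ((isIso_prod_iff (C := B) (D := B)).mp c'.2).1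
        (congrArg Prod.fst m.hom.w) (congrArg Prod.snd m.hom.w) m.hom.right.hom.w))
  map_id _ := rfl
  map_comp _ _ := rfl

/-- The functor `M(Δ, refl) : M(id_B) ⥤ M(⟨cod, dom⟩)` induced by the square
`(Δ, refl) : id_B ⟶ ⟨cod, dom⟩`. -/
def mDeltaRefl (B : Type u) [SmallCategory B] : MCat (𝟭 B) ⥤ MCat (isoP B) where
  obj c :=
    haveI := c.2
    ⟨{ left := (c.obj.left, c.obj.left), right := (reflF B).obj c.obj.right,
       hom := (c.obj.hom, c.obj.hom) },
      (isIso_prod_iff (C := B) (D := B)).mpr ⟨c.2, c.2⟩⟩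
  map := fun {c c'} m =>
    ObjectProperty.homMk <|
    { left := (m.hom.left, m.hom.left)
      right := (reflF B).map m.hom.right
      w := by refine Prod.ext ?_ ?_ <;> · dsimp [isoP, isoCod, isoDom, reflF]; exact m.hom.w }
  map_id _ := rfl
  map_comp _ _ := rfl


lemma isoCat_eqToHom_left {B : Type u} [SmallCategory B] {X Y : IsoCat B} (h : X = Y) :
    (eqToHom h : X ⟶ Y).hom.left = eqToHom (by rw [h]) := by subst h; rfl

lemma isoCat_eqToHom_right {B : Type u} [SmallCategory B] {X Y : IsoCat B} (h : X = Y) :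
    (eqToHom h : X ⟶ Y).hom.right = eqToHom (by rw [h]) := by subst h; rfl

lemma isoCat_comp_left {B : Type u} [SmallCategory B] {X Y Z : IsoCat B}
    (f : X ⟶ Y) (g : Y ⟶ Z) : (f ≫ g).hom.left = f.hom.left ≫ g.hom.left := rfl

lemma isoCat_comp_right {B : Type u} [SmallCategory B] {X Y Z : IsoCat B}
    (f : X ⟶ Y) (g : Y ⟶ Z) : (f ≫ g).hom.right = f.hom.right ≫ g.hom.right := rfl

/-- `(Δ, refl)` is a morphism of algebras from `id_B` (with its
canonical structure, the left projection `M(id_B) ⥤ B`) to `(⟨cod, dom⟩, str_B)`: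
`str_B ∘ M(Δ, refl) = refl ∘ (structure map of id_B)`. -/
theorem stmt_18 (B : Type u) [SmallCategory B] :
    mDeltaRefl B ⋙ strB B = rCat (𝟭 B) ⋙ reflF B := by
  refine CategoryTheory.Functor.ext (fun c => ?_) (fun c c' m => ?_)
  · haveI := c.2
    rw [Functor.comp_obj, Functor.comp_obj]
    dsimp [mDeltaRefl, strB, rCat, reflF, isoP, isoCod, isoDom, Functor.prod',
      ObjectProperty.ι]
    congr 1
    erw [Category.id_comp, IsIso.hom_inv_id]; rfl
  · apply ObjectProperty.hom_ext
    apply Arrow.hom_ext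
    · erw [isoCat_comp_left, isoCat_comp_left, isoCat_eqToHom_left, isoCat_eqToHom_left, eqToHom_refl, eqToHom_refl, Category.id_comp, Category.comp_id]; rfl
    · erw [isoCat_comp_right, isoCat_comp_right, isoCat_eqToHom_right, isoCat_eqToHom_right, eqToHom_refl, eqToHom_refl, Category.id_comp, Category.comp_id]; rfl
end
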